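/- Suppose G is connected and V is a compact symmetric (V = V⁻¹) neighborhood of the identity e in G such that there exist Q ∈ ℕ and c > 0 with lim_{k→∞} μ(V^k)/(c·k^Q) = 1, where V^k denotes the k-fold product set V·V⋯V. Then (V^k)_{k∈ℕ} is a Følner sequence in G. (This polynomial growth hypothesis holds in every simply connected, connected, nilpotent Lie group.) -/

import Mathlib

open MeasureTheory Filter Topology
open scoped Pointwise ENNReal

/-- For a Borel set `E` with `0 < μ E < ∞`, the Følner defect function
`β_E(x) = μ(E \ Ex⁻¹) / μ(E)`. Here `Ex⁻¹ = {y | yx ∈ E} = (· * x) ⁻¹' E`. -/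
noncomputable def folnerDefect {G : Type*} [Group G] [MeasurableSpace G]
    (μ : Measure G) (E : Set G) (x : G) : ℝ :=
  (μ (E \ (· * x) ⁻¹' E)).toReal / (μ E).toReal

/-- A sequence of Borel sets of finite positive measure is a Følner sequence if
`β_{E k} → 0` uniformly on every compact subset of `G`. -/
def IsFolnerSeq {G : Type*} [Group G] [TopologicalSpace G] [MeasurableSpace G]
    (μ : Measure G) (E : ℕ → Set G) : Prop :=
  ∀ K : Set G, IsCompact K →
    TendstoUniformlyOn (fun k x => folnerDefect μ (E k) x) 0 atTop K

/-- If `G` is connected and `V` is a compact symmetric neighborhood of the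
identity with polynomial growth `μ(V^k)/(c·k^Q) → 1`, then `(V^k)` is a Følner sequence. -/
theorem isFolnerSeq_pow_of_polynomialGrowth {G : Type*} [Group G] [TopologicalSpace G]
    [IsTopologicalGroup G] [LocallyCompactSpace G] [SigmaCompactSpace G] [T2Space G]
    [ConnectedSpace G] [MeasurableSpace G] [BorelSpace G]
    (μ : Measure G) [μ.IsMulRightInvariant] [IsFiniteMeasureOnCompacts μ]
    [μ.IsOpenPosMeasure] [μ.Regular] (hμ : μ ≠ 0)
    (V : Set G) (hVcomp : IsCompact V) (hVsymm : V⁻¹ = V) (hVnhd : V ∈ nhds (1 : G))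
    (Q : ℕ) (c : ℝ) (hc : 0 < c)
    (hgrowth : Tendsto (fun k : ℕ => (μ (V ^ k)).toReal / (c * (k : ℝ) ^ Q))
      atTop (nhds 1)) :
    IsFolnerSeq μ (fun k => V ^ k) := by
  intro K hK
  have hV1 : (1 : G) ∈ V := mem_of_mem_nhds hVnhd
  have hpow_symm : ∀ n : ℕ, (V ^ n)⁻¹ = V ^ n := by
    intro n; rw [← inv_pow, hVsymm]
  have hcompPow : ∀ n : ℕ, IsCompact (V ^ n) := by
    intro n
    induction n with
    | zero => rw [pow_zero, ← Set.singleton_one]; exact isCompact_singleton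
    | succ n ih => rw [pow_succ]; exact ih.mul hVcomp
  have hmono : ∀ {a b : ℕ}, a ≤ b → V ^ a ⊆ V ^ b :=
    fun h => Set.pow_subset_pow_right hV1 h
  have h1int : (1 : G) ∈ interior V := mem_interior_iff_mem_nhds.mpr hVnhd
  -- every point lies in some V^(n+1)
  have hsub : ∀ n : ℕ, V ^ n ⊆ interior (V ^ (n + 1)) := by
    intro n x hx
    have hsm : interior V * V ^ n ⊆ V ^ (n + 1) := by
      rw [pow_succ']
      exact Set.mul_subset_mul_right interior_subset
    have hopen : IsOpen (interior V * V ^ n) := isOpen_interior.mul_right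
    have hx' : x ∈ interior V * V ^ n := by
      simpa using Set.mul_mem_mul h1int hx
    exact interior_maximal hsm hopen hx'
  let H : Subgroup G :=
    { carrier := ⋃ n : ℕ, V ^ (n + 1)
      one_mem' := Set.mem_iUnion.2 ⟨0, by simpa using hV1⟩
      mul_mem' := by
        intro a b ha hb
        obtain ⟨p, hp⟩ := Set.mem_iUnion.1 ha
        obtain ⟨q, hq⟩ := Set.mem_iUnion.1 hb
        refine Set.mem_iUnion.2 ⟨p + q + 1, ?_⟩
        have : V ^ (p + q + 1 + 1) = V ^ (p + 1) * V ^ (q + 1) := by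
          rw [← pow_add]; ring_nf
        rw [this]
        exact Set.mul_mem_mul hp hq
      inv_mem' := by
        intro a ha
        obtain ⟨p, hp⟩ := Set.mem_iUnion.1 ha
        refine Set.mem_iUnion.2 ⟨p, ?_⟩
        have := Set.inv_mem_inv.2 hp
        rwa [hpow_symm] at this }
  have hHopen : IsOpen (H : Set G) := by
    refine H.isOpen_of_mem_nhds (g := 1) ?_
    refine Filter.mem_of_superset hVnhd ?_
    intro y hy
    exact Set.mem_iUnion.2 ⟨0, by simpa using hy⟩
  have hHuniv : (H : Set G) = Set.univ :=
    IsClopen.eq_univ ⟨H.isClosed_of_isOpen hHopen, hHopen⟩ ⟨1, H.one_mem⟩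
  -- K is covered by the interiors, hence K ⊆ V^m for some m
  obtain ⟨m, hKm⟩ : ∃ m : ℕ, K ⊆ V ^ m := by
    have hcover : K ⊆ ⋃ n : ℕ, interior (V ^ (n + 1)) := by
      intro x _
      have hx : x ∈ (H : Set G) := hHuniv ▸ Set.mem_univ x
      obtain ⟨p, hp⟩ := Set.mem_iUnion.1 hx
      exact Set.mem_iUnion.2 ⟨p + 1, hsub (p + 1) hp⟩
    obtain ⟨t, ht⟩ := hK.elim_finite_subcover _ (fun n => isOpen_interior) hcover
    refine ⟨t.sup id + 1, fun x hx => ?_⟩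
    obtain ⟨n, hn, hxn⟩ := Set.mem_iUnion₂.1 (ht hx)
    exact hmono (Nat.succ_le_succ (Finset.le_sup (f := id) hn)) (interior_subset hxn)
  -- measure facts
  set g : ℕ → ℝ := fun k => (μ (V ^ k)).toReal with hg
  have hfin : ∀ k : ℕ, μ (V ^ k) ≠ ∞ := fun k => (hcompPow k).measure_lt_top.ne
  have hposE : ∀ k : ℕ, 1 ≤ k → 0 < μ (V ^ k) := by
    intro k hk
    have h0 : 0 < μ (interior V) := isOpen_interior.measure_pos μ ⟨1, h1int⟩
    refine h0.trans_le (measure_mono ?_)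
    exact (interior_subset).trans (by simpa using hmono hk)
  have hgpos : ∀ k : ℕ, 1 ≤ k → 0 < g k := fun k hk =>
    ENNReal.toReal_pos (hposE k hk).ne' (hfin k)
  have hgmono : ∀ {a b : ℕ}, a ≤ b → g a ≤ g b := fun h =>
    ENNReal.toReal_mono (hfin _) (measure_mono (hmono h))
  -- the ratio g(k+m)/g k tends to 1
  have hb : ∀ k : ℕ, 1 ≤ k → (c * (k : ℝ) ^ Q) ≠ 0 := by
    intro k hk
    have : (0 : ℝ) < (k : ℝ) ^ Q := pow_pos (by exact_mod_cast hk) Q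
    positivity
  have h2 : Tendsto (fun k : ℕ => (μ (V ^ (k + m))).toReal / (c * ((k + m : ℕ) : ℝ) ^ Q))
      atTop (nhds 1) := hgrowth.comp (tendsto_add_atTop_nat m)
  have h3 : Tendsto (fun k : ℕ => (c * (k : ℝ) ^ Q) / (μ (V ^ k)).toReal) atTop (nhds 1) := by
    have := hgrowth.inv₀ one_ne_zero
    simpa [inv_div] using this
  have h4 : Tendsto (fun k : ℕ => (c * ((k + m : ℕ) : ℝ) ^ Q) / (c * (k : ℝ) ^ Q))
      atTop (nhds 1) := by
    have hbase : Tendsto (fun k : ℕ => 1 + (m : ℝ) / k) atTop (nhds 1) := by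
      have := tendsto_const_div_atTop_nhds_zero_nat (m : ℝ)
      simpa using (tendsto_const_nhds (x := (1:ℝ)) (f := atTop)).add this
    have hpow : Tendsto (fun k : ℕ => (1 + (m : ℝ) / k) ^ Q) atTop (nhds 1) := by
      simpa using hbase.pow Q
    refine hpow.congr' ?_
    filter_upwards [eventually_ge_atTop 1] with k hk
    have hk0 : (k : ℝ) ≠ 0 := Nat.cast_ne_zero.2 (by omega)
    push_cast
    field_simp
    rw [← mul_pow, div_mul_cancel₀ _ hk0]
  have hr : Tendsto (fun k : ℕ => g (k + m) / g k) atTop (nhds 1) := by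
    have := (h2.mul (h4.mul h3))
    rw [one_mul, one_mul] at this
    refine this.congr' ?_
    filter_upwards [eventually_ge_atTop 1] with k hk
    have hgk : g k ≠ 0 := (hgpos k hk).ne'
    have hbk : (c * (k : ℝ) ^ Q) ≠ 0 := hb k hk
    have hbkm : (c * ((k + m : ℕ) : ℝ) ^ Q) ≠ 0 := hb (k + m) (by omega)
    show (μ (V ^ (k + m))).toReal / (c * ((k + m : ℕ) : ℝ) ^ Q) *
        ((c * ((k + m : ℕ) : ℝ) ^ Q) / (c * (k : ℝ) ^ Q) *
          ((c * (k : ℝ) ^ Q) / (μ (V ^ k)).toReal)) = g (k + m) / g k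
    simp only [hg]
    field_simp
  -- conclude uniform convergence
  rw [Metric.tendstoUniformlyOn_iff]
  intro ε hε
  have hev : ∀ᶠ k : ℕ in atTop, |g (k + m) / g k - 1| < ε := by
    have := Metric.tendsto_nhds.1 hr ε hε
    simpa [Real.dist_eq] using this
  filter_upwards [hev, eventually_ge_atTop 1] with k hk hk1 x hxK
  have hgk : 0 < g k := hgpos k hk1
  -- bound the defect
  set E := V ^ k with hE
  set B := (· * x) ⁻¹' E with hB
  have hBmeas : MeasurableSet B := (measurable_mul_const x) (hcompPow k).measurableSet
  have hμB : μ B = μ E := measure_preimage_mul_right μ x E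
  have hxm : x⁻¹ ∈ V ^ m := by
    have := Set.inv_mem_inv.2 (hKm hxK)
    rwa [hpow_symm] at this
  have hEB : E ∪ B ⊆ V ^ (k + m) := by
    intro y hy
    rcases hy with hy | hy
    · exact hmono (Nat.le_add_right _ _) hy
    · have : y * x ∈ V ^ k := hy
      have h2' : y * x * x⁻¹ ∈ V ^ k * V ^ m := Set.mul_mem_mul this hxm
      rw [pow_add]
      simpa using h2'
  have hdiff : μ (E \ B) ≤ μ (V ^ (k + m)) - μ (V ^ k) := by
    have h1 : μ (E \ B) = μ (E ∪ B) - μ B := by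
      rw [← Set.union_diff_right]
      exact measure_diff Set.subset_union_right hBmeas.nullMeasurableSet
        (by rw [hμB]; exact hfin k)
    rw [h1, hμB]
    exact tsub_le_tsub (measure_mono hEB) le_rfl
  have hdiffR : (μ (E \ B)).toReal ≤ g (k + m) - g k := by
    have hsubR : (μ (V ^ (k + m)) - μ (V ^ k)).toReal = g (k + m) - g k :=
      ENNReal.toReal_sub_of_le (measure_mono (hmono (Nat.le_add_right _ _))) (hfin _)
    calc (μ (E \ B)).toReal ≤ (μ (V ^ (k + m)) - μ (V ^ k)).toReal :=
          ENNReal.toReal_mono (ne_top_of_le_ne_top (hfin (k + m)) tsub_le_self) hdiff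
      _ = g (k + m) - g k := hsubR
  have hdefle : folnerDefect μ E x ≤ g (k + m) / g k - 1 := by
    have : folnerDefect μ E x ≤ (g (k + m) - g k) / g k := by
      unfold folnerDefect
      gcongr
    calc folnerDefect μ E x ≤ (g (k + m) - g k) / g k := this
      _ = g (k + m) / g k - 1 := by rw [sub_div, div_self hgk.ne']
  have hdefnn : 0 ≤ folnerDefect μ E x :=
    div_nonneg ENNReal.toReal_nonneg ENNReal.toReal_nonneg
  have : folnerDefect μ E x < ε :=
    lt_of_le_of_lt hdefle (lt_of_le_of_lt (le_abs_self _) hk)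
  simpa [Real.dist_eq, abs_of_nonneg hdefnn] using this
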